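/- A CPTP map on a bipartite system is QI-preserving if and only if it is completely QI-preserving; that is, QIP = CQIP. -/

import Mathlib

open Matrix Finset
open scoped Kronecker ComplexOrder

/-- A density operator: positive semidefinite with unit trace. -/
def IsDensity {n : Type*} [Fintype n] (ρ : Matrix n n ℂ) : Prop :=
  ρ.PosSemidef ∧ ρ.trace = 1

/-- A quantum-incoherent (QI) state on a bipartite system with quantum part `Q`
and incoherent part `B` (with its fixed reference basis): a state of the form
`∑ j, p j • ρ j ⊗ |j⟩⟨j|`. -/
def IsQI {Q B : Type*} [Fintype Q] [Fintype B] [DecidableEq B]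
    (σ : Matrix (Q × B) (Q × B) ℂ) : Prop :=
  ∃ (p : B → ℝ) (ρ : B → Matrix Q Q ℂ),
    (∀ j, 0 ≤ p j) ∧ (∑ j, p j = 1) ∧ (∀ j, IsDensity (ρ j)) ∧
    σ = ∑ j, (p j : ℂ) • (ρ j ⊗ₖ Matrix.single j j 1)

/-- An incoherent state: a density operator diagonal in the reference basis. -/
def IsIncoherent {n : Type*} [Fintype n] (σ : Matrix n n ℂ) : Prop :=
  IsDensity σ ∧ ∀ x y, x ≠ y → σ x y = 0

/-- The extension `id_k ⊗ E` of a linear map on matrices. -/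
def tensId {n m : Type*} (k : Type*)
    (E : Matrix n n ℂ →ₗ[ℂ] Matrix m m ℂ) :
    Matrix (k × n) (k × n) ℂ →ₗ[ℂ] Matrix (k × m) (k × m) ℂ where
  toFun X := Matrix.of fun p q => E (Matrix.of fun a b => X (p.1, a) (q.1, b)) p.2 q.2
  map_add' X Y := by
    ext p q
    show E (Matrix.of fun a b => (X + Y) (p.1, a) (q.1, b)) p.2 q.2 = _
    rw [show (Matrix.of fun a b => (X + Y) (p.1, a) (q.1, b)) =
        (Matrix.of fun a b => X (p.1, a) (q.1, b)) +
        (Matrix.of fun a b => Y (p.1, a) (q.1, b)) from rfl, map_add]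
    rfl
  map_smul' c X := by
    ext p q
    show E (Matrix.of fun a b => (c • X) (p.1, a) (q.1, b)) p.2 q.2 = _
    rw [show (Matrix.of fun a b => (c • X) (p.1, a) (q.1, b)) =
        c • (Matrix.of fun a b => X (p.1, a) (q.1, b)) from rfl, _root_.map_smul]
    rfl

/-- Complete positivity: `id_k ⊗ E` preserves positive semidefiniteness for all `k`. -/
def IsCompletelyPositive {n m : Type*} [Fintype n] [Fintype m]
    (E : Matrix n n ℂ →ₗ[ℂ] Matrix m m ℂ) : Prop :=
  ∀ (k : ℕ) (X : Matrix (Fin k × n) (Fin k × n) ℂ), X.PosSemidef →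
    ((tensId (Fin k) E) X).PosSemidef

/-- A completely positive trace-preserving (CPTP) linear map. -/
def IsCPTP {n m : Type*} [Fintype n] [Fintype m]
    (E : Matrix n n ℂ →ₗ[ℂ] Matrix m m ℂ) : Prop :=
  IsCompletelyPositive E ∧ ∀ X, (E X).trace = X.trace

/-- The basis density operators `ρ_{a,b}` built from the reference basis. -/
noncomputable def rhoBasis (D : ℕ) (a b : Fin D) : Matrix (Fin D) (Fin D) ℂ :=
  if a = b then Matrix.single a a 1
  else if (a : ℕ) < b then
    (1 / 2 : ℂ) • (Matrix.single a a 1 + Matrix.single a b 1 +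
      Matrix.single b a 1 + Matrix.single b b 1)
  else
    (1 / 2 : ℂ) • (Matrix.single a a 1 + (-Complex.I) • Matrix.single a b 1 +
      Complex.I • Matrix.single b a 1 + Matrix.single b b 1)

/-- The extension `id^{A'B'} ⊗ E` of a bipartite map `E` on `AB`, acting on the system
`(A'A)(B'B)` with quantum part `A'A` and incoherent part `B'B`. -/
def extMap (DA DB DA' DB' : ℕ)
    (E : Matrix (Fin DA × Fin DB) (Fin DA × Fin DB) ℂ →ₗ[ℂ]
      Matrix (Fin DA × Fin DB) (Fin DA × Fin DB) ℂ) :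
    Matrix ((Fin DA' × Fin DA) × (Fin DB' × Fin DB)) ((Fin DA' × Fin DA) × (Fin DB' × Fin DB)) ℂ
      →ₗ[ℂ]
    Matrix ((Fin DA' × Fin DA) × (Fin DB' × Fin DB)) ((Fin DA' × Fin DA) × (Fin DB' × Fin DB)) ℂ
    where
  toFun X := Matrix.of fun p q =>
    E (Matrix.of fun x y => X ((p.1.1, x.1), (p.2.1, x.2)) ((q.1.1, y.1), (q.2.1, y.2)))
      (p.1.2, p.2.2) (q.1.2, q.2.2)
  map_add' X Y := by
    ext p q
    show E (Matrix.of fun (x y : Fin DA × Fin DB) =>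
        (X + Y) ((p.1.1, x.1), (p.2.1, x.2)) ((q.1.1, y.1), (q.2.1, y.2)))
        (p.1.2, p.2.2) (q.1.2, q.2.2) = _
    rw [show (Matrix.of fun (x y : Fin DA × Fin DB) =>
          (X + Y) ((p.1.1, x.1), (p.2.1, x.2)) ((q.1.1, y.1), (q.2.1, y.2))) =
        (Matrix.of fun (x y : Fin DA × Fin DB) =>
          X ((p.1.1, x.1), (p.2.1, x.2)) ((q.1.1, y.1), (q.2.1, y.2))) +
        (Matrix.of fun (x y : Fin DA × Fin DB) =>
          Y ((p.1.1, x.1), (p.2.1, x.2)) ((q.1.1, y.1), (q.2.1, y.2)))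
        from rfl, map_add]
    rfl
  map_smul' c X := by
    ext p q
    show E (Matrix.of fun (x y : Fin DA × Fin DB) =>
        (c • X) ((p.1.1, x.1), (p.2.1, x.2)) ((q.1.1, y.1), (q.2.1, y.2)))
        (p.1.2, p.2.2) (q.1.2, q.2.2) = _
    rw [show (Matrix.of fun (x y : Fin DA × Fin DB) =>
          (c • X) ((p.1.1, x.1), (p.2.1, x.2)) ((q.1.1, y.1), (q.2.1, y.2))) =
        c • (Matrix.of fun (x y : Fin DA × Fin DB) =>
          X ((p.1.1, x.1), (p.2.1, x.2)) ((q.1.1, y.1), (q.2.1, y.2)))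
        from rfl, _root_.map_smul]
    rfl

/-- Completely QI-preserving: every extension `id^{A'B'} ⊗ E` maps QI states
(quantum part `A'A`, incoherent part `B'B`) to QI states. -/
def IsCQIP (DA DB : ℕ)
    (E : Matrix (Fin DA × Fin DB) (Fin DA × Fin DB) ℂ →ₗ[ℂ]
      Matrix (Fin DA × Fin DB) (Fin DA × Fin DB) ℂ) : Prop :=
  ∀ (DA' DB' : ℕ)
    (σ : Matrix ((Fin DA' × Fin DA) × (Fin DB' × Fin DB))
      ((Fin DA' × Fin DA) × (Fin DB' × Fin DB)) ℂ),
    IsQI σ → IsQI (extMap DA DB DA' DB' E σ)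

/-- The extension `id^{A''} ⊗ E` with only a quantum auxiliary system `A''`, acting on
`(A''A)B` with quantum part `A''A` and incoherent part `B`. -/
def extMapA (DA DB DA'' : ℕ)
    (E : Matrix (Fin DA × Fin DB) (Fin DA × Fin DB) ℂ →ₗ[ℂ]
      Matrix (Fin DA × Fin DB) (Fin DA × Fin DB) ℂ) :
    Matrix ((Fin DA'' × Fin DA) × Fin DB) ((Fin DA'' × Fin DA) × Fin DB) ℂ →ₗ[ℂ]
    Matrix ((Fin DA'' × Fin DA) × Fin DB) ((Fin DA'' × Fin DA) × Fin DB) ℂ where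
  toFun X := Matrix.of fun p q =>
    E (Matrix.of fun x y => X ((p.1.1, x.1), x.2) ((q.1.1, y.1), y.2))
      (p.1.2, p.2) (q.1.2, q.2)
  map_add' X Y := by
    ext p q
    show E (Matrix.of fun (x y : Fin DA × Fin DB) =>
        (X + Y) ((p.1.1, x.1), x.2) ((q.1.1, y.1), y.2)) (p.1.2, p.2) (q.1.2, q.2) = _
    rw [show (Matrix.of fun (x y : Fin DA × Fin DB) =>
          (X + Y) ((p.1.1, x.1), x.2) ((q.1.1, y.1), y.2)) =
        (Matrix.of fun (x y : Fin DA × Fin DB) => X ((p.1.1, x.1), x.2) ((q.1.1, y.1), y.2)) +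
        (Matrix.of fun (x y : Fin DA × Fin DB) => Y ((p.1.1, x.1), x.2) ((q.1.1, y.1), y.2))
        from rfl, map_add]
    rfl
  map_smul' c X := by
    ext p q
    show E (Matrix.of fun (x y : Fin DA × Fin DB) =>
        (c • X) ((p.1.1, x.1), x.2) ((q.1.1, y.1), y.2)) (p.1.2, p.2) (q.1.2, q.2) = _
    rw [show (Matrix.of fun (x y : Fin DA × Fin DB) =>
          (c • X) ((p.1.1, x.1), x.2) ((q.1.1, y.1), y.2)) =
        c • (Matrix.of fun (x y : Fin DA × Fin DB) => X ((p.1.1, x.1), x.2) ((q.1.1, y.1), y.2))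
        from rfl, _root_.map_smul]
    rfl

/-- The maximally entangled state `|Φ_D⟩⟨Φ_D|` with `|Φ_D⟩ = (1/√D) ∑ d |d⟩|d⟩`. -/
noncomputable def maxEnt (D : ℕ) : Matrix (Fin D × Fin D) (Fin D × Fin D) ℂ :=
  Matrix.of fun p q => if p.1 = p.2 ∧ q.1 = q.2 then (1 / D : ℂ) else 0


/-! ### Auxiliary lemmas -/

lemma psd_real_smul {n : Type*} [Fintype n] {M : Matrix n n ℂ} (hM : M.PosSemidef)
    {c : ℝ} (hc : 0 ≤ c) : ((c : ℂ) • M).PosSemidef := by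
  rw [Matrix.posSemidef_iff_dotProduct_mulVec]
  constructor
  · unfold Matrix.IsHermitian
    rw [Matrix.conjTranspose_smul, hM.1]
    congr 1
    simp
  · intro x
    rw [Matrix.smul_mulVec, dotProduct_smul, smul_eq_mul]
    exact mul_nonneg (Complex.zero_le_real.2 hc) (hM.dotProduct_mulVec_nonneg x)

lemma psd_diag_nonneg {n : Type*} [Fintype n] [DecidableEq n] {M : Matrix n n ℂ}
    (hM : M.PosSemidef) (i : n) : 0 ≤ M i i := by
  have := hM.dotProduct_mulVec_nonneg (Pi.single i 1)
  simpa [dotProduct, Matrix.mulVec, Pi.single_apply, mul_ite, ite_mul,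
    Finset.sum_ite_eq, Finset.sum_ite_eq'] using this

lemma psd_trace_zero {n : Type*} [Fintype n] {A : Matrix n n ℂ} (hA : A.PosSemidef)
    (h : A.trace = 0) : A = 0 := by
  exact hA.trace_eq_zero_iff.mp h

lemma kron_conjTranspose {m n : Type*} (A : Matrix m m ℂ) (B : Matrix n n ℂ) :
    (A ⊗ₖ B)ᴴ = Aᴴ ⊗ₖ Bᴴ := by
  ext p q
  simp [Matrix.conjTranspose_apply, Matrix.kroneckerMap_apply, star_mul', mul_comm]

lemma psd_kron {m n : Type*} [Fintype m] [Fintype n] {A : Matrix m m ℂ} {B : Matrix n n ℂ}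
    (hA : A.PosSemidef) (hB : B.PosSemidef) : (A ⊗ₖ B).PosSemidef := by
  exact hA.kronecker hB

lemma psd_std {n : Type*} [Fintype n] [DecidableEq n] (j : n) :
    (Matrix.single j j (1:ℂ)).PosSemidef := by
  have : Matrix.single j j (1:ℂ) = Matrix.diagonal (Pi.single j 1) := by
    ext a b
    by_cases ha : j = a <;> by_cases hb : a = b <;>
      simp [Matrix.single, Matrix.diagonal, Pi.single_apply, *] <;> aesop
  rw [this]
  exact Matrix.PosSemidef.diagonal (by intro i; by_cases h : i = j <;> simp [Pi.single_apply, h])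

lemma trace_std {n : Type*} [Fintype n] [DecidableEq n] (j : n) :
    (Matrix.single j j (1:ℂ)).trace = 1 := by
  simp [Matrix.trace, Matrix.diag, Matrix.single, Finset.sum_ite_eq]



lemma IsQI.offdiag {Q B : Type*} [Fintype Q] [Fintype B] [DecidableEq B]
    {σ : Matrix (Q × B) (Q × B) ℂ} (h : IsQI σ) :
    ∀ (a : Q) (b : B) (c : Q) (d : B), b ≠ d → σ (a, b) (c, d) = 0 := by
  obtain ⟨p, ρ, hp0, hp1, hρ, rfl⟩ := h
  intro a b c d hbd
  rw [Matrix.sum_apply]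
  refine Finset.sum_eq_zero fun j _ => ?_
  have : Matrix.single j j (1:ℂ) b d = 0 := by
    apply Matrix.single_apply_of_ne
    rintro ⟨rfl, rfl⟩; exact hbd rfl
  simp [Matrix.kroneckerMap_apply, this]

lemma IsQI.density {Q B : Type*} [Fintype Q] [Fintype B] [DecidableEq B]
    {σ : Matrix (Q × B) (Q × B) ℂ} (h : IsQI σ) : IsDensity σ := by
  obtain ⟨p, ρ, hp0, hp1, hρ, rfl⟩ := h
  constructor
  · apply Finset.sum_induction _ Matrix.PosSemidef
      (fun _ _ => Matrix.PosSemidef.add) Matrix.PosSemidef.zero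
    intro j _
    exact psd_real_smul (psd_kron (hρ j).1 (psd_std j)) (hp0 j)
  · rw [Matrix.trace_sum]
    have : ∀ j, ((p j : ℂ) • (ρ j ⊗ₖ Matrix.single j j (1:ℂ))).trace = (p j : ℂ) := by
      intro j
      rw [Matrix.trace_smul, Matrix.trace_kronecker, (hρ j).2, trace_std]
      simp
    rw [Finset.sum_congr rfl fun j _ => this j, ← Complex.ofReal_sum, hp1, Complex.ofReal_one]

lemma qi_of_diag {Q B : Type*} [Fintype Q] [Fintype B] [DecidableEq Q] [DecidableEq B]
    {X : Matrix (Q × B) (Q × B) ℂ} (hden : IsDensity X)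
    (h0 : ∀ (a : Q) (b : B) (c : Q) (d : B), b ≠ d → X (a, b) (c, d) = 0) : IsQI X := by
  obtain ⟨hpsd, htr⟩ := hden
  haveI : Nonempty Q := by
    by_contra h
    rw [not_nonempty_iff] at h
    haveI : IsEmpty (Q × B) := Prod.isEmpty_left
    rw [Matrix.trace] at htr
    simp at htr
  set blk : B → Matrix Q Q ℂ := fun j => X.submatrix (fun a => (a, j)) (fun a => (a, j)) with hblkdef
  have hblk : ∀ j, (blk j).PosSemidef := fun j => hpsd.submatrix _
  have ht0 : ∀ j, 0 ≤ (blk j).trace := fun j =>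
    Finset.sum_nonneg fun i _ => psd_diag_nonneg (hblk j) i
  set p : B → ℝ := fun j => ((blk j).trace).re with hpdef
  have htp : ∀ j, (blk j).trace = ((p j : ℝ) : ℂ) := fun j =>
    Complex.eq_re_of_ofReal_le (r := 0) (by simpa using ht0 j)
  have hp0 : ∀ j, 0 ≤ p j := fun j => (Complex.nonneg_iff.mp (ht0 j)).1
  have hsum : ∑ j, (p j : ℂ) = 1 := by
    have : ∑ j, (blk j).trace = X.trace := by
      rw [Matrix.trace]
      rw [Fintype.sum_prod_type]
      rw [Finset.sum_comm]
      rfl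
    rw [← Finset.sum_congr rfl fun j _ => htp j, this, htr]
  have hp1 : ∑ j, p j = 1 := by
    have := hsum
    rw [← Complex.ofReal_sum] at this
    exact_mod_cast this
  refine ⟨p, fun j => if p j = 0 then ((Fintype.card Q : ℂ)⁻¹ • 1) else ((p j : ℂ)⁻¹ • blk j),
    hp0, hp1, ?_, ?_⟩
  · intro j
    dsimp only
    by_cases h : p j = 0
    · rw [if_pos h]
      constructor
      · have h2 : ((Fintype.card Q : ℂ))⁻¹ = ((((Fintype.card Q : ℝ))⁻¹ : ℝ) : ℂ) := by
          push_cast; ring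
        rw [h2]
        exact psd_real_smul (Matrix.PosSemidef.one : (1 : Matrix Q Q ℂ).PosSemidef)
          (inv_nonneg.2 (Nat.cast_nonneg _))
      · rw [Matrix.trace_smul, Matrix.trace_one, smul_eq_mul, inv_mul_cancel₀]
        exact_mod_cast Fintype.card_ne_zero
    · rw [if_neg h]
      constructor
      · have h2 : ((p j : ℂ))⁻¹ = ((((p j)⁻¹ : ℝ)) : ℂ) := (Complex.ofReal_inv _).symm
        rw [h2]
        exact psd_real_smul (hblk j) (inv_nonneg.2 (hp0 j))
      · rw [Matrix.trace_smul, htp j, smul_eq_mul, inv_mul_cancel₀]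
        exact_mod_cast h
  · ext ⟨a, b⟩ ⟨c, d⟩
    rw [Matrix.sum_apply]
    dsimp only
    by_cases hbd : b = d
    · subst hbd
      rw [Finset.sum_eq_single b]
      · by_cases h : p b = 0
        · have hb0 : blk b = 0 := psd_trace_zero (hblk b) (by rw [htp b, h]; simp)
          have hX : X (a, b) (c, b) = blk b a c := rfl
          rw [hX, hb0]
          simp [h]
        · have hX : X (a, b) (c, b) = blk b a c := rfl
          rw [hX, if_neg h]
          simp only [Matrix.smul_apply, Matrix.kroneckerMap_apply,
            Matrix.single_apply_same, mul_one, smul_eq_mul]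
          rw [← mul_assoc, mul_inv_cancel₀ (by exact_mod_cast h), one_mul]
      · intro j _ hj
        simp [Matrix.single, hj]
      · intro h; exact absurd (Finset.mem_univ b) h
    · rw [h0 a b c d hbd]
      symm
      refine Finset.sum_eq_zero fun j _ => ?_
      have hz : Matrix.single j j (1:ℂ) b d = 0 := by
        apply Matrix.single_apply_of_ne
        rintro ⟨rfl, rfl⟩; exact hbd rfl
      simp [hz]


lemma qi_kron_std {Q B : Type*} [Fintype Q] [Fintype B] [DecidableEq B]
    {τ : Matrix Q Q ℂ} (hτ : IsDensity τ) (j : B) :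
    IsQI (τ ⊗ₖ Matrix.single j j (1:ℂ)) := by
  refine ⟨fun j' => if j' = j then 1 else 0, fun _ => τ, fun j' => by positivity,
    by simp, fun _ => hτ, ?_⟩
  rw [Finset.sum_eq_single j]
  · simp
  · intro j' _ hj'
    simp [hj']
  · intro h; exact absurd (Finset.mem_univ j) h

lemma density_pq {n : Type*} [Fintype n] [DecidableEq n] {a c : n} (hac : a ≠ c)
    (z : ℂ) (hz : Complex.normSq z = 1) :
    IsDensity ((1/2 : ℂ) • (Matrix.single a a 1 +
      (starRingEnd ℂ z) • Matrix.single a c 1 +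
      z • Matrix.single c a 1 + Matrix.single c c 1)) := by
  have hz' : z * (starRingEnd ℂ) z = 1 := by
    rw [Complex.mul_conj, hz]; norm_num
  constructor
  · obtain ⟨r, hrr, hrc⟩ : ∃ r : ℂ, r * r = 2⁻¹ ∧ starRingEnd ℂ r = r := by
      refine ⟨(((Real.sqrt 2)⁻¹ : ℝ) : ℂ), ?_, Complex.conj_ofReal _⟩
      rw [← Complex.ofReal_mul, ← mul_inv, Real.mul_self_sqrt (by norm_num)]
      norm_num
    set W : Matrix n (Fin 1) ℂ :=
      Matrix.of (fun i _ => if a = i then r else if c = i then z * r else 0) with hW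
    have key : (1/2 : ℂ) • (Matrix.single a a 1 +
        (starRingEnd ℂ z) • Matrix.single a c 1 +
        z • Matrix.single c a 1 + Matrix.single c c 1) = W * Wᴴ := by
      ext i k
      rw [Matrix.mul_apply, Fin.sum_univ_one, Matrix.conjTranspose_apply, hW]
      by_cases hia : a = i <;> by_cases hic : c = i <;>
        by_cases hka : a = k <;> by_cases hkc : c = k <;>
        subst_vars <;>
        simp_all [Matrix.single, hrc, _root_.map_mul] <;>
        first
          | linear_combination hrr
          | linear_combination (starRingEnd ℂ z) * hrr
          | linear_combination z * hrr
          | linear_combination z * (starRingEnd ℂ z) * hrr + 2⁻¹ * hz'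
          | linear_combination -hrr
          | linear_combination -((starRingEnd ℂ z) * hrr)
          | linear_combination -(z * hrr)
          | linear_combination -(z * (starRingEnd ℂ z) * hrr + 2⁻¹ * hz')
    rw [key]
    exact Matrix.posSemidef_self_mul_conjTranspose _
  · rw [Matrix.trace_smul, Matrix.trace_add, Matrix.trace_add, Matrix.trace_add,
      Matrix.trace_smul, Matrix.trace_smul, trace_std, trace_std]
    have t1 : (Matrix.single a c (1:ℂ)).trace = 0 := by
      simp only [Matrix.trace, Matrix.diag, Matrix.single, Matrix.of_apply]
      refine Finset.sum_eq_zero fun i _ => ?_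
      rw [if_neg]; rintro ⟨rfl, rfl⟩; exact hac rfl
    have t2 : (Matrix.single c a (1:ℂ)).trace = 0 := by
      simp only [Matrix.trace, Matrix.diag, Matrix.single, Matrix.of_apply]
      refine Finset.sum_eq_zero fun i _ => ?_
      rw [if_neg]; rintro ⟨rfl, rfl⟩; exact hac rfl
    rw [t1, t2]
    simp; norm_num


lemma density_std {n : Type*} [Fintype n] [DecidableEq n] (a : n) :
    IsDensity (Matrix.single a a (1:ℂ)) :=
  ⟨psd_std a, trace_std a⟩

lemma std_comb {n : Type*} [DecidableEq n] {a c : n} (hac : a ≠ c) :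
    Matrix.single a c (1:ℂ) =
      ((1/2 : ℂ) • (Matrix.single a a 1 +
        (starRingEnd ℂ (1:ℂ)) • Matrix.single a c 1 +
        (1:ℂ) • Matrix.single c a 1 + Matrix.single c c 1)) +
      Complex.I • ((1/2 : ℂ) • (Matrix.single a a 1 +
        (starRingEnd ℂ Complex.I) • Matrix.single a c 1 +
        Complex.I • Matrix.single c a 1 + Matrix.single c c 1)) +
      (-(1 + Complex.I)/2) • Matrix.single a a 1 +
      (-(1 + Complex.I)/2) • Matrix.single c c 1 := by
  ext i k
  simp only [Matrix.add_apply, Matrix.smul_apply, Matrix.single, Matrix.of_apply,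
    Complex.conj_I, _root_.map_one, smul_eq_mul]
  by_cases hia : a = i <;> by_cases hic : c = i <;>
    by_cases hka : a = k <;> by_cases hkc : c = k <;>
    subst_vars <;> simp_all <;> ring_nf <;> simp [Complex.I_sq] <;> ring


lemma offdiag_kron_std (DA DB : ℕ)
    (E : Matrix (Fin DA × Fin DB) (Fin DA × Fin DB) ℂ →ₗ[ℂ]
      Matrix (Fin DA × Fin DB) (Fin DA × Fin DB) ℂ)
    (hQ : ∀ σ, IsQI σ → IsQI (E σ)) :
    ∀ (τ : Matrix (Fin DA) (Fin DA) ℂ) (j : Fin DB) (a c : Fin DA) (b d : Fin DB),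
      b ≠ d → E (τ ⊗ₖ Matrix.single j j 1) (a, b) (c, d) = 0 := by
  have hdens : ∀ (τ : Matrix (Fin DA) (Fin DA) ℂ), IsDensity τ →
      ∀ (j : Fin DB) (a c : Fin DA) (b d : Fin DB), b ≠ d →
        E (τ ⊗ₖ Matrix.single j j 1) (a, b) (c, d) = 0 :=
    fun τ hτ j a c b d hbd => (hQ _ (qi_kron_std hτ j)).offdiag a b c d hbd
  intro τ j a c b d hbd
  have hτ : τ ⊗ₖ Matrix.single j j (1:ℂ) =
      ∑ i : Fin DA, ∑ i' : Fin DA,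
        (τ i i') • (Matrix.single i i' (1:ℂ) ⊗ₖ Matrix.single j j 1) := by
    ext x y
    rw [Matrix.sum_apply]
    simp only [Matrix.sum_apply, Matrix.smul_apply, Matrix.kroneckerMap_apply,
      Matrix.single, Matrix.of_apply, smul_eq_mul, mul_ite, mul_one, mul_zero,
      ite_mul, zero_mul, ite_and]
    rw [Finset.sum_eq_single x.1]
    · rw [Finset.sum_eq_single y.1] <;> simp +contextual
    · intro i _ hi
      refine Finset.sum_eq_zero fun i' _ => ?_
      simp [hi]
    · simp
  rw [hτ, map_sum, Matrix.sum_apply]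
  refine Finset.sum_eq_zero fun i _ => ?_
  rw [map_sum, Matrix.sum_apply]
  refine Finset.sum_eq_zero fun i' _ => ?_
  rw [_root_.map_smul, Matrix.smul_apply]
  by_cases hii : i = i'
  · subst hii
    rw [hdens _ (density_std i) j a c b d hbd]
    simp
  · have h1 := hdens _ (density_pq hii 1 (by simp)) j a c b d hbd
    have h2 := hdens _ (density_pq hii Complex.I (by simp)) j a c b d hbd
    have h3 := hdens _ (density_std i) j a c b d hbd
    have h4 := hdens _ (density_std i') j a c b d hbd
    rw [std_comb hii]
    simp only [Matrix.add_kronecker, Matrix.smul_kronecker, map_add, _root_.map_smul,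
      Matrix.add_apply, Matrix.smul_apply, smul_eq_mul, Complex.conj_I, _root_.map_one,
      one_smul, one_mul] at h1 h2 ⊢
    linear_combination (τ i i') * h1 + (τ i i') * Complex.I * h2 +
      (τ i i') * (-(1 + Complex.I)/2) * h3 + (τ i i') * (-(1 + Complex.I)/2) * h4


lemma IsQI.reindex {Q B Q' B' : Type*} [Fintype Q] [Fintype B] [DecidableEq B]
    [Fintype Q'] [Fintype B'] [DecidableEq B'] (eQ : Q' ≃ Q) (eB : B' ≃ B)
    {σ : Matrix (Q × B) (Q × B) ℂ} (h : IsQI σ) :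
    IsQI (σ.submatrix (Prod.map eQ eB) (Prod.map eQ eB)) := by
  obtain ⟨p, ρ, hp0, hp1, hρ, rfl⟩ := h
  refine ⟨fun j => p (eB j), fun j => (ρ (eB j)).submatrix eQ eQ, fun j => hp0 _, ?_, ?_, ?_⟩
  · rw [show ∑ j : B', (fun j => p (eB j)) j = ∑ j : B', p (eB j) from rfl,
      Equiv.sum_comp eB p, hp1]
  · intro j
    refine ⟨(hρ (eB j)).1.submatrix _, ?_⟩
    rw [← (hρ (eB j)).2, Matrix.trace, Matrix.trace]
    exact Equiv.sum_comp eQ (fun i => (ρ (eB j)).diag i)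
  · ext ⟨a, b⟩ ⟨c, d⟩
    rw [Matrix.submatrix_apply, Matrix.sum_apply, Matrix.sum_apply]
    rw [← Equiv.sum_comp eB (fun j => ((p j : ℂ) •
      (ρ j ⊗ₖ Matrix.single j j (1:ℂ))) (Prod.map eQ eB (a, b)) (Prod.map eQ eB (c, d)))]
    refine Finset.sum_congr rfl fun j _ => ?_
    simp only [Matrix.smul_apply, Matrix.kroneckerMap_apply, Prod.map_apply,
      Matrix.submatrix_apply, Matrix.single, Matrix.of_apply, smul_eq_mul]
    congr 2
    by_cases h1 : j = b <;> by_cases h2 : j = d <;>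
      simp [h1, h2, eB.apply_eq_iff_eq]


def bigEquiv (DA DB DA' DB' : ℕ) :
    ((Fin DA' × Fin DA) × (Fin DB' × Fin DB)) ≃ (Fin (DA' * DB') × (Fin DA × Fin DB)) :=
  (Equiv.mk (fun p => ((p.1.1, p.2.1), (p.1.2, p.2.2)))
    (fun p => ((p.1.1, p.2.1), (p.1.2, p.2.2))) (fun _ => rfl) (fun _ => rfl)).trans
    (Equiv.prodCongr finProdFinEquiv (Equiv.refl _))

lemma extMap_eq (DA DB DA' DB' : ℕ)
    (E : Matrix (Fin DA × Fin DB) (Fin DA × Fin DB) ℂ →ₗ[ℂ]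
      Matrix (Fin DA × Fin DB) (Fin DA × Fin DB) ℂ)
    (X : Matrix ((Fin DA' × Fin DA) × (Fin DB' × Fin DB))
      ((Fin DA' × Fin DA) × (Fin DB' × Fin DB)) ℂ) :
    extMap DA DB DA' DB' E X =
      ((tensId (Fin (DA' * DB')) E)
        (X.submatrix (bigEquiv DA DB DA' DB').symm (bigEquiv DA DB DA' DB').symm)).submatrix
        (bigEquiv DA DB DA' DB') (bigEquiv DA DB DA' DB') := by
  ext p q
  show E (Matrix.of fun x y => X ((p.1.1, x.1), (p.2.1, x.2)) ((q.1.1, y.1), (q.2.1, y.2)))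
      (p.1.2, p.2.2) (q.1.2, q.2.2) = _
  show _ = E (Matrix.of fun x y =>
      X.submatrix (bigEquiv DA DB DA' DB').symm (bigEquiv DA DB DA' DB').symm
        ((bigEquiv DA DB DA' DB' p).1, x) ((bigEquiv DA DB DA' DB' q).1, y))
      (bigEquiv DA DB DA' DB' p).2 (bigEquiv DA DB DA' DB' q).2
  have harg : (Matrix.of fun x y : Fin DA × Fin DB =>
      X.submatrix (bigEquiv DA DB DA' DB').symm (bigEquiv DA DB DA' DB').symm
        ((bigEquiv DA DB DA' DB' p).1, x) ((bigEquiv DA DB DA' DB' q).1, y)) =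
      (Matrix.of fun x y => X ((p.1.1, x.1), (p.2.1, x.2)) ((q.1.1, y.1), (q.2.1, y.2))) := by
    ext x y
    simp [bigEquiv, Matrix.submatrix_apply]
  rw [harg]
  rfl

lemma extMap_psd (DA DB DA' DB' : ℕ)
    (E : Matrix (Fin DA × Fin DB) (Fin DA × Fin DB) ℂ →ₗ[ℂ]
      Matrix (Fin DA × Fin DB) (Fin DA × Fin DB) ℂ)
    (hE : IsCompletelyPositive E)
    {X : Matrix ((Fin DA' × Fin DA) × (Fin DB' × Fin DB))
      ((Fin DA' × Fin DA) × (Fin DB' × Fin DB)) ℂ} (hX : X.PosSemidef) :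
    (extMap DA DB DA' DB' E X).PosSemidef := by
  rw [extMap_eq]
  exact ((hE (DA' * DB') _ (hX.submatrix _)).submatrix _)

lemma extMap_trace (DA DB DA' DB' : ℕ)
    (E : Matrix (Fin DA × Fin DB) (Fin DA × Fin DB) ℂ →ₗ[ℂ]
      Matrix (Fin DA × Fin DB) (Fin DA × Fin DB) ℂ)
    (hTr : ∀ X, (E X).trace = X.trace)
    (Y : Matrix ((Fin DA' × Fin DA) × (Fin DB' × Fin DB))
      ((Fin DA' × Fin DA) × (Fin DB' × Fin DB)) ℂ) :
    (extMap DA DB DA' DB' E Y).trace = Y.trace := by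
  have key : ∀ (a' : Fin DA') (b' : Fin DB'),
      (∑ a : Fin DA, ∑ b : Fin DB,
        (extMap DA DB DA' DB' E Y) ((a', a), (b', b)) ((a', a), (b', b)))
        = ∑ a : Fin DA, ∑ b : Fin DB, Y ((a', a), (b', b)) ((a', a), (b', b)) := by
    intro a' b'
    have h := hTr (Matrix.of fun x y : Fin DA × Fin DB =>
      Y ((a', x.1), (b', x.2)) ((a', y.1), (b', y.2)))
    rw [Matrix.trace, Matrix.trace, Fintype.sum_prod_type, Fintype.sum_prod_type] at h
    exact h
  calc (extMap DA DB DA' DB' E Y).trace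
      = ∑ x : Fin DA' × Fin DA, ∑ y : Fin DB' × Fin DB,
        (extMap DA DB DA' DB' E Y) (x, y) (x, y) := by
        rw [Matrix.trace, Fintype.sum_prod_type]; rfl
    _ = ∑ a' : Fin DA', ∑ a : Fin DA, ∑ b' : Fin DB', ∑ b : Fin DB,
        (extMap DA DB DA' DB' E Y) ((a', a), (b', b)) ((a', a), (b', b)) := by
        rw [Fintype.sum_prod_type]
        exact Finset.sum_congr rfl fun a' _ => Finset.sum_congr rfl fun a _ => by
          rw [Fintype.sum_prod_type]
    _ = ∑ a' : Fin DA', ∑ b' : Fin DB', ∑ a : Fin DA, ∑ b : Fin DB,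
        (extMap DA DB DA' DB' E Y) ((a', a), (b', b)) ((a', a), (b', b)) := by
        exact Finset.sum_congr rfl fun a' _ => Finset.sum_comm
    _ = ∑ a' : Fin DA', ∑ b' : Fin DB', ∑ a : Fin DA, ∑ b : Fin DB,
        Y ((a', a), (b', b)) ((a', a), (b', b)) := by
        exact Finset.sum_congr rfl fun a' _ => Finset.sum_congr rfl fun b' _ => key a' b'
    _ = ∑ a' : Fin DA', ∑ a : Fin DA, ∑ b' : Fin DB', ∑ b : Fin DB,
        Y ((a', a), (b', b)) ((a', a), (b', b)) := by
        exact Finset.sum_congr rfl fun a' _ => Finset.sum_comm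
    _ = ∑ x : Fin DA' × Fin DA, ∑ y : Fin DB' × Fin DB, Y (x, y) (x, y) := by
        rw [Fintype.sum_prod_type]
        exact (Finset.sum_congr rfl fun a' _ => Finset.sum_congr rfl fun a _ => by
          rw [Fintype.sum_prod_type]).symm
    _ = Y.trace := by symm; rw [Matrix.trace, Fintype.sum_prod_type]; rfl


def oneProdEquiv (n : ℕ) : (Fin 1 × Fin n) ≃ Fin n :=
  ⟨fun p => p.2, fun a => (0, a), fun p => Prod.ext (Subsingleton.elim _ _) rfl,
    fun a => rfl⟩

/-- a CPTP map on a bipartite system is QI-preserving iff it is completely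
QI-preserving: `QIP = CQIP`. -/
theorem qip_eq_cqip (DA DB : ℕ)
    (E : Matrix (Fin DA × Fin DB) (Fin DA × Fin DB) ℂ →ₗ[ℂ]
      Matrix (Fin DA × Fin DB) (Fin DA × Fin DB) ℂ)
    (hE : IsCPTP E) :
    (∀ σ, IsQI σ → IsQI (E σ)) ↔ IsCQIP DA DB E := by
  constructor
  · intro hQ DA' DB' σ hσ
    have hden := hσ.density
    obtain ⟨p, ρ, hp0, hp1, hρ, rfl⟩ := hσ
    apply qi_of_diag
    · refine ⟨extMap_psd DA DB DA' DB' E hE.1 hden.1, ?_⟩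
      rw [extMap_trace DA DB DA' DB' E hE.2]
      exact hden.2
    · intro A b C d hbd
      obtain ⟨b1, b2⟩ := b
      obtain ⟨d1, d2⟩ := d
      rw [map_sum, Matrix.sum_apply]
      refine Finset.sum_eq_zero fun j _ => ?_
      obtain ⟨j1, j2⟩ := j
      rw [_root_.map_smul, Matrix.smul_apply]
      suffices h : (extMap DA DB DA' DB' E
          (ρ (j1, j2) ⊗ₖ Matrix.single (j1, j2) (j1, j2) 1)) (A, (b1, b2))
          (C, (d1, d2)) = 0 by rw [h]; simp
      show E (Matrix.of fun x y => (ρ (j1, j2) ⊗ₖ Matrix.single (j1, j2) (j1, j2) (1:ℂ))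
        ((A.1, x.1), (b1, x.2)) ((C.1, y.1), (d1, y.2))) (A.2, b2) (C.2, d2) = 0
      have hinner : (Matrix.of fun x y : Fin DA × Fin DB =>
          (ρ (j1, j2) ⊗ₖ Matrix.single (j1, j2) (j1, j2) (1:ℂ))
            ((A.1, x.1), (b1, x.2)) ((C.1, y.1), (d1, y.2))) =
          if j1 = b1 ∧ j1 = d1 then
            ((Matrix.of fun x1 y1 => ρ (j1, j2) (A.1, x1) (C.1, y1)) ⊗ₖ
              Matrix.single j2 j2 1)
          else 0 := by
        ext x y
        by_cases hcond : j1 = b1 ∧ j1 = d1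
        · obtain ⟨hb1, hd1⟩ := hcond
          subst hb1
          subst hd1
          simp [Matrix.kroneckerMap_apply, Matrix.single, Prod.ext_iff]
        · rw [if_neg hcond]
          simp only [Matrix.of_apply, Matrix.kroneckerMap_apply, Matrix.zero_apply,
            Matrix.single, Prod.mk.injEq]
          rw [if_neg (by tauto), mul_zero]
      rw [hinner]
      split_ifs with hc
      · have hbd2 : b2 ≠ d2 := by
          intro h2
          apply hbd
          obtain ⟨hb1, hd1⟩ := hc
          rw [← hb1, ← hd1, h2]
        exact offdiag_kron_std DA DB E hQ _ j2 A.2 C.2 b2 d2 hbd2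
      · rw [map_zero]
        rfl
  · intro hC σ hσ
    set eA : (Fin 1 × Fin DA) ≃ Fin DA := oneProdEquiv DA with heA
    set eB : (Fin 1 × Fin DB) ≃ Fin DB := oneProdEquiv DB with heB
    have h1 := hσ.reindex eA eB
    have h2 := hC 1 1 _ h1
    have h3 : extMap DA DB 1 1 E (σ.submatrix (Prod.map eA eB) (Prod.map eA eB)) =
        (E σ).submatrix (Prod.map eA eB) (Prod.map eA eB) := by
      ext p q
      rfl
    rw [h3] at h2
    have h4 := h2.reindex eA.symm eB.symm
    have h5 : ((E σ).submatrix (Prod.map eA eB) (Prod.map eA eB)).submatrix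
        (Prod.map eA.symm eB.symm) (Prod.map eA.symm eB.symm) = E σ := by
      rw [Matrix.submatrix_submatrix]
      have hcomp : (Prod.map eA eB) ∘ (Prod.map eA.symm eB.symm) = id := by
        funext x
        simp [Prod.map]
      rw [hcomp, Matrix.submatrix_id_id]
    rwa [h5] at h4
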